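/- If R is a finite local ring with maximal ideal J, then the distant graph G(R,Δ) is a complete multipartite graph: its vertex set partitions into |R/J| + 1 classes of size |J| each (the radical-parallelism classes), and two vertices are adjacent if and only if they lie in different classes. -/

import Mathlib

open Matrix

/-- The cyclic left submodule `R(a,b)` of `R²`. -/
def ptSub (R : Type*) [Ring R] (a b : R) : Submodule R (Fin 2 → R) :=
  Submodule.span R {![a, b]}

/-- The right action of an invertible matrix `g` on submodules of `R²`, via `v ↦ v ᵥ* g`. -/
def mulGL (R : Type*) [Ring R] (g : (Matrix (Fin 2) (Fin 2) R)ˣ)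
    (p : Submodule R (Fin 2 → R)) : Submodule R (Fin 2 → R) :=
  p.map (Matrix.vecMulLinear g.val)

/-- The projective line over `R`: the orbit of `R(1,0)` under `GL₂(R)`. -/
def projLine (R : Type*) [Ring R] : Set (Submodule R (Fin 2 → R)) :=
  {p | ∃ g, mulGL R g (ptSub R 1 0) = p}

/-- The distant relation: the orbit of the pair `(R(1,0), R(0,1))` under `GL₂(R)`. -/
def IsDistant (R : Type*) [Ring R] (p q : Submodule R (Fin 2 → R)) : Prop :=
  ∃ g, mulGL R g (ptSub R 1 0) = p ∧ mulGL R g (ptSub R 0 1) = q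

set_option linter.unusedSectionVars false
set_option linter.unusedVariables false

section Aux
variable {R : Type*} [Ring R] [Finite R]

lemma aux_mul_one_comm {a b : R} (h : a * b = 1) : b * a = 1 := by
  have hinj : Function.Injective (fun x : R => x * a) := by
    intro x y hxy
    have : x * a * b = y * a * b := by simp only at hxy; rw [hxy]
    simpa [mul_assoc, h] using this
  obtain ⟨c, hc⟩ := Finite.injective_iff_surjective.mp hinj 1
  simp only at hc
  have hb : c = b := by
    calc c = c * (a * b) := by rw [h, mul_one]
    _ = (c * a) * b := by rw [mul_assoc]
    _ = b := by rw [hc, one_mul]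
  rw [← hb]; exact hc

lemma aux_isUnit_left {a b : R} (h : a * b = 1) : IsUnit a :=
  ⟨⟨a, b, h, aux_mul_one_comm h⟩, rfl⟩

lemma aux_isUnit_right {a b : R} (h : a * b = 1) : IsUnit b :=
  ⟨⟨b, a, aux_mul_one_comm h, h⟩, rfl⟩

lemma aux_not_unit_mul_left {a : R} (ha : ¬IsUnit a) (r : R) : ¬IsUnit (r * a) := by
  intro h
  obtain ⟨u, hu⟩ := h
  have : (↑u⁻¹ * r) * a = 1 := by rw [mul_assoc, ← hu, Units.inv_mul]
  exact ha (aux_isUnit_right this)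

lemma aux_not_unit_mul_right {a : R} (ha : ¬IsUnit a) (r : R) : ¬IsUnit (a * r) := by
  intro h
  obtain ⟨u, hu⟩ := h
  have : a * (r * ↑u⁻¹) = 1 := by rw [← mul_assoc, ← hu, Units.mul_inv]
  exact ha (aux_isUnit_left this)

variable (hloc : ∀ a : R, IsUnit a ∨ IsUnit (1 - a))
include hloc

lemma aux_not_unit_add {a b : R} (ha : ¬IsUnit a) (hb : ¬IsUnit b) : ¬IsUnit (a + b) := by
  intro h
  obtain ⟨u, hu⟩ := h
  have h1 : ↑u⁻¹ * a + ↑u⁻¹ * b = 1 := by rw [← mul_add, ← hu, Units.inv_mul]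
  rcases hloc (↑u⁻¹ * a) with h2 | h2
  · exact aux_not_unit_mul_left ha _ h2
  · rw [← h1, add_sub_cancel_left] at h2
    exact aux_not_unit_mul_left hb _ h2

lemma aux_not_unit_sub {a b : R} (ha : ¬IsUnit a) (hb : ¬IsUnit b) : ¬IsUnit (a - b) := by
  rw [sub_eq_add_neg]
  refine aux_not_unit_add hloc ha ?_
  rw [← neg_one_mul]
  exact aux_not_unit_mul_left hb _

omit [Finite R] in
lemma aux_one_sub_unit {a : R} (ha : ¬IsUnit a) : IsUnit (1 - a) :=
  (hloc a).resolve_left ha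

end Aux

section Aux2
variable {R : Type*} [Ring R]

lemma aux_mulGL_span (g : (Matrix (Fin 2) (Fin 2) R)ˣ) (x : Fin 2 → R) :
    mulGL R g (Submodule.span R {x}) = Submodule.span R {x ᵥ* g.val} := by
  unfold mulGL
  rw [Submodule.map_span, Set.image_singleton, Matrix.vecMulLinear_apply]

lemma aux_vecMul_e0 (M : Matrix (Fin 2) (Fin 2) R) : (![1, 0] : Fin 2 → R) ᵥ* M = M 0 := by
  funext j
  simp [Matrix.vecMul, dotProduct, Fin.sum_univ_two]

lemma aux_vecMul_e1 (M : Matrix (Fin 2) (Fin 2) R) : (![0, 1] : Fin 2 → R) ᵥ* M = M 1 := by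
  funext j
  simp [Matrix.vecMul, dotProduct, Fin.sum_univ_two]

end Aux2

section Aux3
variable {R : Type*} [Ring R] [Finite R]

/-- If two cyclic submodules agree and the second generator is unimodular,
the first generator is a unit multiple of the second. -/
lemma aux_span_singleton_eq {x y : Fin 2 → R}
    (h : Submodule.span R {x} = Submodule.span R {y})
    (hy : IsUnit (y 0) ∨ IsUnit (y 1)) : ∃ u : Rˣ, x = (u : R) • y := by
  have hx : x ∈ Submodule.span R {y} := h ▸ Submodule.mem_span_singleton_self x
  obtain ⟨c, hc⟩ := Submodule.mem_span_singleton.mp hx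
  have hy' : y ∈ Submodule.span R {x} := h ▸ Submodule.mem_span_singleton_self y
  obtain ⟨d, hd⟩ := Submodule.mem_span_singleton.mp hy'
  have hdc : (d * c) • y = y := by rw [mul_smul, hc, hd]
  have hdc1 : d * c = 1 := by
    rcases hy with hu | hu
    · obtain ⟨w, hw⟩ := hu
      have := congrFun hdc 0
      simp only [Pi.smul_apply, smul_eq_mul] at this
      rw [← hw] at this
      calc d * c = d * c * ↑w * ↑w⁻¹ := by rw [mul_assoc, Units.mul_inv, mul_one]
      _ = ↑w * ↑w⁻¹ := by rw [this]
      _ = 1 := Units.mul_inv w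
    · obtain ⟨w, hw⟩ := hu
      have := congrFun hdc 1
      simp only [Pi.smul_apply, smul_eq_mul] at this
      rw [← hw] at this
      calc d * c = d * c * ↑w * ↑w⁻¹ := by rw [mul_assoc, Units.mul_inv, mul_one]
      _ = ↑w * ↑w⁻¹ := by rw [this]
      _ = 1 := Units.mul_inv w
  exact ⟨⟨c, d, aux_mul_one_comm hdc1, hdc1⟩, hc.symm⟩

variable (hloc : ∀ a : R, IsUnit a ∨ IsUnit (1 - a))
include hloc

/-- Each row of an invertible matrix over a local ring is unimodular. -/
lemma aux_row_unimod (g : (Matrix (Fin 2) (Fin 2) R)ˣ) (i : Fin 2) :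
    IsUnit (g.val i 0) ∨ IsUnit (g.val i 1) := by
  by_contra hcon
  push_neg at hcon
  obtain ⟨h0, h1⟩ := hcon
  have hgi : (g.val * g.inv) i i = 1 := by
    rw [g.val_inv]; simp [Matrix.one_apply]
  rw [Matrix.mul_apply, Fin.sum_univ_two] at hgi
  have : ¬IsUnit (g.val i 0 * g.inv 0 i + g.val i 1 * g.inv 1 i) :=
    aux_not_unit_add hloc (aux_not_unit_mul_right h0 _) (aux_not_unit_mul_right h1 _)
  rw [hgi] at this
  exact this isUnit_one

end Aux3

section Aux4
variable {R : Type*} [Ring R]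

/-- A unimodular vector spans a point of the projective line. -/
lemma aux_unimod_mem {v : Fin 2 → R} (hv : IsUnit (v 0) ∨ IsUnit (v 1)) :
    Submodule.span R {v} ∈ projLine R := by
  rcases hv with ⟨u, hu⟩ | ⟨u, hu⟩
  · refine ⟨⟨Matrix.of ![v, ![0, 1]], Matrix.of ![![↑u⁻¹, -(↑u⁻¹ * v 1)], ![0, 1]], ?_, ?_⟩, ?_⟩
    · ext i j
      fin_cases i <;> fin_cases j <;>
        simp [Matrix.mul_apply, Fin.sum_univ_two, ← hu, ← mul_assoc, Matrix.one_apply]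
    · ext i j
      fin_cases i <;> fin_cases j <;>
        simp [Matrix.mul_apply, Fin.sum_univ_two, ← hu, ← mul_assoc, Matrix.one_apply]
    · show mulGL R _ (Submodule.span R {![1, 0]}) = _
      rw [aux_mulGL_span, aux_vecMul_e0]
      congr 1
  · refine ⟨⟨Matrix.of ![v, ![1, 0]], Matrix.of ![![0, 1], ![↑u⁻¹, -(↑u⁻¹ * v 0)]], ?_, ?_⟩, ?_⟩
    · ext i j
      fin_cases i <;> fin_cases j <;>
        simp [Matrix.mul_apply, Fin.sum_univ_two, ← hu, ← mul_assoc, Matrix.one_apply]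
    · ext i j
      fin_cases i <;> fin_cases j <;>
        simp [Matrix.mul_apply, Fin.sum_univ_two, ← hu, ← mul_assoc, Matrix.one_apply]
    · show mulGL R _ (Submodule.span R {![1, 0]}) = _
      rw [aux_mulGL_span, aux_vecMul_e0]
      congr 1

end Aux4

section Aux5
variable {R : Type*} [Ring R] [Finite R]
variable (hloc : ∀ a : R, IsUnit a ∨ IsUnit (1 - a))
include hloc

/-- The master criterion: two unimodularly-generated points are distant iff the matrix
formed by the two generators is invertible. -/
lemma aux_master {v w : Fin 2 → R}
    (hv : IsUnit (v 0) ∨ IsUnit (v 1)) (hw : IsUnit (w 0) ∨ IsUnit (w 1)) :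
    IsDistant R (Submodule.span R {v}) (Submodule.span R {w}) ↔
      IsUnit (Matrix.of ![v, w]) := by
  clear hv hw
  constructor
  · rintro ⟨g, h1, h2⟩
    rw [show ptSub R 1 0 = Submodule.span R {![1, 0]} from rfl, aux_mulGL_span,
      aux_vecMul_e0] at h1
    rw [show ptSub R 0 1 = Submodule.span R {![0, 1]} from rfl, aux_mulGL_span,
      aux_vecMul_e1] at h2
    obtain ⟨u, hu⟩ := aux_span_singleton_eq h1.symm (aux_row_unimod hloc g 0)
    obtain ⟨u', hu'⟩ := aux_span_singleton_eq h2.symm (aux_row_unimod hloc g 1)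
    have hDu : IsUnit (Matrix.of ![![(↑u : R), 0], ![0, ↑u']] : Matrix (Fin 2) (Fin 2) R) := by
      refine ⟨⟨_, Matrix.of ![![(↑u⁻¹ : R), 0], ![0, ↑u'⁻¹]], ?_, ?_⟩, rfl⟩ <;>
      · ext i j
        fin_cases i <;> fin_cases j <;>
          simp [Matrix.mul_apply, Fin.sum_univ_two, Matrix.one_apply]
    obtain ⟨d, hd⟩ := hDu
    have hM : Matrix.of ![v, w] = Units.val (d * g) := by
      rw [Units.val_mul, hd]
      ext i j
      fin_cases i <;> fin_cases j <;>
        simp [Matrix.mul_apply, Fin.sum_univ_two, hu, hu']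
    rw [hM]
    exact (d * g).isUnit
  · rintro ⟨g, hg⟩
    refine ⟨g, ?_, ?_⟩
    · rw [show ptSub R 1 0 = Submodule.span R {![1, 0]} from rfl, aux_mulGL_span,
        aux_vecMul_e0, hg]
      congr 1
    · rw [show ptSub R 0 1 = Submodule.span R {![0, 1]} from rfl, aux_mulGL_span,
        aux_vecMul_e1, hg]
      congr 1

end Aux5

section Aux6
variable {R : Type*} [Ring R] [Finite R]

lemma aux_tri_unit {b c : R} (hc : IsUnit c) :
    IsUnit (Matrix.of ![![1, b], ![0, c]] : Matrix (Fin 2) (Fin 2) R) := by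
  obtain ⟨u, hu⟩ := hc
  refine ⟨⟨_, Matrix.of ![![1, -(b * ↑u⁻¹)], ![0, ↑u⁻¹]], ?_, ?_⟩, rfl⟩ <;>
  · ext i j
    fin_cases i <;> fin_cases j <;>
      simp [Matrix.mul_apply, Fin.sum_univ_two, Matrix.one_apply, ← hu, mul_assoc]

lemma aux_tri_unit' {b c : R}
    (h : IsUnit (Matrix.of ![![1, b], ![0, c]] : Matrix (Fin 2) (Fin 2) R)) : IsUnit c := by
  obtain ⟨u, hu⟩ := h
  have h1 : (Units.val u * Units.val u⁻¹) 1 1 = 1 := by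
    rw [Units.mul_inv]; simp [Matrix.one_apply]
  rw [Matrix.mul_apply, Fin.sum_univ_two] at h1
  simp only [hu] at h1
  simp only [Matrix.of_apply, Matrix.cons_val', Matrix.cons_val_zero, Matrix.cons_val_one,
    Matrix.head_cons, Matrix.head_fin_const, Matrix.empty_val', Matrix.cons_val_fin_one,
    zero_mul, zero_add] at h1
  exact aux_isUnit_left h1

lemma aux_low_unit (a : R) :
    IsUnit (Matrix.of ![![1, 0], ![a, 1]] : Matrix (Fin 2) (Fin 2) R) := by
  refine ⟨⟨_, Matrix.of ![![1, 0], ![-a, 1]], ?_, ?_⟩, rfl⟩ <;>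
  · ext i j
    fin_cases i <;> fin_cases j <;>
      simp [Matrix.mul_apply, Fin.sum_univ_two, Matrix.one_apply]

lemma aux_swap_unit :
    IsUnit (Matrix.of ![![0, 1], ![1, 0]] : Matrix (Fin 2) (Fin 2) R) := by
  refine ⟨⟨_, Matrix.of ![![0, 1], ![1, 0]], ?_, ?_⟩, rfl⟩ <;>
  · ext i j
    fin_cases i <;> fin_cases j <;>
      simp [Matrix.mul_apply, Fin.sum_univ_two, Matrix.one_apply]

end Aux6

section Aux7
variable {R : Type*} [Ring R] [Finite R]

lemma aux_dist11 (b b' : R) :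
    IsUnit (Matrix.of ![![1, b], ![1, b']] : Matrix (Fin 2) (Fin 2) R) ↔ IsUnit (b' - b) := by
  obtain ⟨E, hE⟩ := aux_low_unit (R := R) 1
  have hdec : (Matrix.of ![![1, b], ![1, b']] : Matrix (Fin 2) (Fin 2) R) =
      Units.val E * (Matrix.of ![![1, b], ![0, b' - b]] : Matrix (Fin 2) (Fin 2) R) := by
    rw [hE]
    ext i j
    fin_cases i <;> fin_cases j <;>
      simp [Matrix.mul_apply, Fin.sum_univ_two]
  rw [hdec, Units.isUnit_units_mul]
  exact ⟨aux_tri_unit', aux_tri_unit⟩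

variable (hloc : ∀ a : R, IsUnit a ∨ IsUnit (1 - a))
include hloc

lemma aux_dist1j {j : R} (hj : ¬IsUnit j) (b : R) :
    IsUnit (Matrix.of ![![1, b], ![j, 1]] : Matrix (Fin 2) (Fin 2) R) := by
  obtain ⟨E, hE⟩ := aux_low_unit (R := R) j
  have hdec : (Matrix.of ![![1, b], ![j, 1]] : Matrix (Fin 2) (Fin 2) R) =
      Units.val E * (Matrix.of ![![1, b], ![0, 1 - j * b]] : Matrix (Fin 2) (Fin 2) R) := by
    rw [hE]
    ext i j
    fin_cases i <;> fin_cases j <;>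
      simp [Matrix.mul_apply, Fin.sum_univ_two]
  rw [hdec, Units.isUnit_units_mul]
  exact aux_tri_unit (aux_one_sub_unit hloc (aux_not_unit_mul_right hj b))

lemma aux_distj1 {j : R} (hj : ¬IsUnit j) (b : R) :
    IsUnit (Matrix.of ![![j, 1], ![1, b]] : Matrix (Fin 2) (Fin 2) R) := by
  obtain ⟨S, hS⟩ := aux_swap_unit (R := R)
  have hdec : (Matrix.of ![![j, 1], ![1, b]] : Matrix (Fin 2) (Fin 2) R) =
      Units.val S * (Matrix.of ![![1, b], ![j, 1]] : Matrix (Fin 2) (Fin 2) R) := by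
    rw [hS]
    ext i j
    fin_cases i <;> fin_cases j <;>
      simp [Matrix.mul_apply, Fin.sum_univ_two]
  rw [hdec, Units.isUnit_units_mul]
  exact aux_dist1j hloc hj b

lemma aux_distjj {j j' : R} (hj : ¬IsUnit j) (hj' : ¬IsUnit j') :
    ¬IsUnit (Matrix.of ![![j, 1], ![j', 1]] : Matrix (Fin 2) (Fin 2) R) := by
  intro h
  obtain ⟨u, hu⟩ := h
  have e0 : (Units.val u * Units.val u⁻¹) 0 0 = 1 := by
    rw [Units.mul_inv]; simp [Matrix.one_apply]
  have e1 : (Units.val u * Units.val u⁻¹) 1 0 = 0 := by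
    rw [Units.mul_inv]; simp [Matrix.one_apply]
  rw [Matrix.mul_apply, Fin.sum_univ_two] at e0 e1
  simp only [hu, Matrix.of_apply, Matrix.cons_val', Matrix.cons_val_zero, Matrix.cons_val_one,
    Matrix.head_cons, Matrix.empty_val', Matrix.cons_val_fin_one, one_mul,
    Matrix.vecHead, Matrix.vecTail] at e0 e1
  -- e0 : j * A + B = 1, e1 : j' * A + B = 0
  have hsub : (j - j') * Units.val u⁻¹ 0 0 = 1 := by
    have h2 : (j * Units.val u⁻¹ 0 0 + Units.val u⁻¹ 1 0)
        - (j' * Units.val u⁻¹ 0 0 + Units.val u⁻¹ 1 0) = 1 := by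
      rw [e0, e1, sub_zero]
    rw [← h2]
    noncomm_ring
  exact aux_not_unit_sub hloc hj hj' (aux_isUnit_left hsub)

end Aux7

section Aux8
variable {R : Type*} [Ring R] [Finite R]

lemma aux_smul_vec (c a b : R) : c • (![a, b] : Fin 2 → R) = ![c * a, c * b] := by
  funext i
  fin_cases i <;> simp

variable (hloc : ∀ a : R, IsUnit a ∨ IsUnit (1 - a))
include hloc

lemma aux_pt_cases {p : Submodule R (Fin 2 → R)} (hp : p ∈ projLine R) :
    (∃ b : R, p = ptSub R 1 b) ∨ (∃ j : R, ¬IsUnit j ∧ p = ptSub R j 1) := by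
  obtain ⟨g, hg⟩ := hp
  rw [show ptSub R 1 0 = Submodule.span R {![1, 0]} from rfl, aux_mulGL_span,
    aux_vecMul_e0] at hg
  by_cases hv0 : IsUnit (g.val 0 0)
  · left
    obtain ⟨u, hu⟩ := hv0
    refine ⟨↑u⁻¹ * g.val 0 1, ?_⟩
    rw [← hg]
    show Submodule.span R {g.val 0} = Submodule.span R {![1, ↑u⁻¹ * g.val 0 1]}
    have hvec : (![1, ↑u⁻¹ * g.val 0 1] : Fin 2 → R) = (↑u⁻¹ : R) • g.val 0 := by
      funext i
      fin_cases i <;> simp [← hu]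
    rw [hvec, Submodule.span_singleton_smul_eq (u⁻¹).isUnit]
  · right
    obtain ⟨u, hu⟩ := (aux_row_unimod hloc g 0).resolve_left hv0
    refine ⟨↑u⁻¹ * g.val 0 0, aux_not_unit_mul_left hv0 _, ?_⟩
    · rw [← hg]
      show Submodule.span R {g.val 0} = Submodule.span R {![↑u⁻¹ * g.val 0 0, 1]}
      have hvec : (![↑u⁻¹ * g.val 0 0, 1] : Fin 2 → R) = (↑u⁻¹ : R) • g.val 0 := by
        funext i
        fin_cases i <;> simp [← hu]
      rw [hvec, Submodule.span_singleton_smul_eq (u⁻¹).isUnit]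

end Aux8


section Aux9
variable {R : Type*} [Ring R] [Finite R]

lemma aux_inj_11 {b b' : R} (h : ptSub R 1 b = ptSub R 1 b') : b = b' := by
  obtain ⟨u, hu⟩ := aux_span_singleton_eq (x := ![1, b]) (y := ![1, b']) h
    (Or.inl isUnit_one)
  rw [aux_smul_vec] at hu
  have h0 := congrFun hu 0
  have h1 := congrFun hu 1
  simp at h0 h1
  rw [h1, ← h0, one_mul]

lemma aux_inj_1j {b j : R} (hj : ¬IsUnit j) : ptSub R 1 b ≠ ptSub R j 1 := by
  intro h
  obtain ⟨u, hu⟩ := aux_span_singleton_eq (x := ![1, b]) (y := ![j, 1]) h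
    (Or.inr isUnit_one)
  rw [aux_smul_vec] at hu
  have h0 := congrFun hu 0
  simp at h0
  exact hj (aux_isUnit_right h0.symm)

lemma aux_inj_jj {j j' : R} (h : ptSub R j 1 = ptSub R j' 1) : j = j' := by
  obtain ⟨u, hu⟩ := aux_span_singleton_eq (x := ![j, 1]) (y := ![j', 1]) h
    (Or.inr isUnit_one)
  rw [aux_smul_vec] at hu
  have h0 := congrFun hu 0
  have h1 := congrFun hu 1
  simp at h0 h1
  rw [h0, ← h1, one_mul]

end Aux9

section Aux10
variable (R : Type*) [Ring R] [Fintype R] [Nontrivial R]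
variable (hloc : ∀ a : R, IsUnit a ∨ IsUnit (1 - a))

/-- The Jacobson radical (set of non-units) as an additive subgroup. -/
def auxJ : AddSubgroup R where
  carrier := {a | ¬IsUnit a}
  zero_mem' := not_isUnit_zero
  add_mem' := fun ha hb => aux_not_unit_add hloc ha hb
  neg_mem' := fun {a} ha => by
    show ¬IsUnit (-a)
    rw [← neg_one_mul]
    exact aux_not_unit_mul_left ha _

lemma aux_mem_auxJ (x : R) : x ∈ auxJ R hloc ↔ ¬IsUnit x := Iff.rfl

lemma aux_cardJ : Nat.card (auxJ R hloc) = Nat.card {a : R // ¬IsUnit a} := rfl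

lemma aux_card_pos : 0 < Nat.card {a : R // ¬IsUnit a} := by
  have : Nonempty {a : R // ¬IsUnit a} := ⟨⟨0, not_isUnit_zero⟩⟩
  exact Nat.card_pos

lemma aux_cardQ :
    Nat.card (R ⧸ auxJ R hloc) = Fintype.card R / Nat.card {a : R // ¬IsUnit a} := by
  have h := AddSubgroup.card_eq_card_quotient_mul_card_addSubgroup (auxJ R hloc)
  rw [aux_cardJ, Nat.card_eq_fintype_card] at h
  rw [h, Nat.mul_div_cancel _ (aux_card_pos R)]

end Aux10

section Aux11
variable (R : Type*) [Ring R] [Fintype R] [Nontrivial R]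
variable (hloc : ∀ a : R, IsUnit a ∨ IsUnit (1 - a))

lemma aux_mem1 (b : R) : ptSub R 1 b ∈ projLine R :=
  aux_unimod_mem (v := ![1, b]) (Or.inl (by simp))

lemma aux_memj (j : R) : ptSub R j 1 ∈ projLine R :=
  aux_unimod_mem (v := ![j, 1]) (Or.inr (by simp))

/-- The parametrization of the projective line by `R ⊕ J`. -/
noncomputable def auxE :
    (R ⊕ {a : R // ¬IsUnit a}) ≃ {p : Submodule R (Fin 2 → R) // p ∈ projLine R} := by
  refine Equiv.ofBijective
    (fun x => Sum.rec (fun b => ⟨ptSub R 1 b, aux_mem1 R b⟩)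
      (fun j => ⟨ptSub R j.1 1, aux_memj R j.1⟩) x) ⟨?_, ?_⟩
  · rintro (b | ⟨j, hj⟩) (b' | ⟨j', hj'⟩) h <;> simp only [Subtype.mk.injEq] at h
    · rw [aux_inj_11 h]
    · exact absurd h (aux_inj_1j hj')
    · exact absurd h.symm (aux_inj_1j hj)
    · simp only [Sum.inr.injEq, Subtype.mk.injEq]
      exact aux_inj_jj h
  · rintro ⟨p, hp⟩
    rcases aux_pt_cases hloc hp with ⟨b, hb⟩ | ⟨j, hj, hjeq⟩
    · exact ⟨Sum.inl b, Subtype.ext hb.symm⟩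
    · exact ⟨Sum.inr ⟨j, hj⟩, Subtype.ext hjeq.symm⟩

lemma auxE_inl (b : R) : auxE R hloc (Sum.inl b) = ⟨ptSub R 1 b, aux_mem1 R b⟩ := rfl

lemma auxE_inr (j : {a : R // ¬IsUnit a}) :
    auxE R hloc (Sum.inr j) = ⟨ptSub R j.1 1, aux_memj R j.1⟩ := rfl

lemma auxE_symm_inl (b : R) (h : ptSub R 1 b ∈ projLine R) :
    (auxE R hloc).symm ⟨ptSub R 1 b, h⟩ = Sum.inl b := by
  rw [Equiv.symm_apply_eq, auxE_inl]

lemma auxE_symm_inr (j : R) (hj : ¬IsUnit j) (h : ptSub R j 1 ∈ projLine R) :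
    (auxE R hloc).symm ⟨ptSub R j 1, h⟩ = Sum.inr ⟨j, hj⟩ := by
  rw [Equiv.symm_apply_eq, auxE_inr]

/-- The classifying map on the parametrizing type. -/
noncomputable def auxcl : (R ⊕ {a : R // ¬IsUnit a}) →
    Fin (Fintype.card R / Nat.card {a : R // ¬IsUnit a} + 1) := fun x =>
  Sum.rec
    (fun b => Fin.castSucc
      ((Finite.equivFinOfCardEq (aux_cardQ R hloc)) (QuotientAddGroup.mk b)))
    (fun _ => Fin.last _) x

/-- The classifying map on the projective line. -/
noncomputable def auxf : {p : Submodule R (Fin 2 → R) // p ∈ projLine R} →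
    Fin (Fintype.card R / Nat.card {a : R // ¬IsUnit a} + 1) := fun p =>
  auxcl R hloc ((auxE R hloc).symm p)

lemma auxf_inl (b : R) (h : ptSub R 1 b ∈ projLine R) :
    auxf R hloc ⟨ptSub R 1 b, h⟩ = Fin.castSucc
      ((Finite.equivFinOfCardEq (aux_cardQ R hloc)) (QuotientAddGroup.mk b)) := by
  unfold auxf
  rw [auxE_symm_inl]
  rfl

lemma auxf_inr (j : R) (hj : ¬IsUnit j) (h : ptSub R j 1 ∈ projLine R) :
    auxf R hloc ⟨ptSub R j 1, h⟩ = Fin.last _ := by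
  unfold auxf
  rw [auxE_symm_inr R hloc j hj]
  rfl

end Aux11

/-- For a finite local ring `R` (every element or its complement to `1` is a
unit) with Jacobson radical `J` (the set of non-units), the distant graph is complete
multipartite: the vertex set splits into `|R/J| + 1` classes of size `|J|`, two vertices
are adjacent iff they lie in different classes, and the classes are exactly the
radical-parallelism classes (same distant neighbourhoods). -/
theorem local_distant_graph_complete_multipartite {R : Type*} [Ring R] [Fintype R]
    [Nontrivial R] (hloc : ∀ a : R, IsUnit a ∨ IsUnit (1 - a)) :
    ∃ f : {p : Submodule R (Fin 2 → R) // p ∈ projLine R} →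
        Fin (Fintype.card R / Nat.card {a : R // ¬IsUnit a} + 1),
      (∀ c, Nat.card {p // f p = c} = Nat.card {a : R // ¬IsUnit a}) ∧
      (∀ p q, IsDistant R p.1 q.1 ↔ f p ≠ f q) ∧
      (∀ p q, f p = f q ↔ ∀ r : {p : Submodule R (Fin 2 → R) // p ∈ projLine R},
        (IsDistant R p.1 r.1 ↔ IsDistant R q.1 r.1)) := by
  have hdist : ∀ p q : {p : Submodule R (Fin 2 → R) // p ∈ projLine R},
      IsDistant R p.1 q.1 ↔ auxf R hloc p ≠ auxf R hloc q := by
    rintro ⟨p, hp⟩ ⟨q, hq⟩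
    rcases aux_pt_cases hloc hp with ⟨b, rfl⟩ | ⟨j, hj, rfl⟩ <;>
      rcases aux_pt_cases hloc hq with ⟨b', rfl⟩ | ⟨j', hj', rfl⟩
    · rw [auxf_inl, auxf_inl]
      have hM : IsDistant R (ptSub R 1 b) (ptSub R 1 b') ↔ IsUnit (b' - b) := by
        rw [show ptSub R 1 b = Submodule.span R {![1, b]} from rfl,
          show ptSub R 1 b' = Submodule.span R {![1, b']} from rfl,
          aux_master hloc (Or.inl (by simp)) (Or.inl (by simp)), aux_dist11]
      rw [hM]
      constructor
      · intro hu hcon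
        rw [Fin.castSucc_inj] at hcon
        have h2 := (Finite.equivFinOfCardEq (aux_cardQ R hloc)).injective hcon
        rw [QuotientAddGroup.eq, aux_mem_auxJ, neg_add_eq_sub] at h2
        exact h2 hu
      · intro hne
        by_contra hnu
        apply hne
        have h2 : QuotientAddGroup.mk (s := auxJ R hloc) b = QuotientAddGroup.mk b' := by
          rw [QuotientAddGroup.eq, aux_mem_auxJ, neg_add_eq_sub]
          exact hnu
        rw [h2]
    · rw [auxf_inl, auxf_inr R hloc j' hj']
      exact iff_of_true
        ((aux_master hloc (Or.inl (by simp)) (Or.inr (by simp))).mpr (aux_dist1j hloc hj' b))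
        (Fin.castSucc_lt_last _).ne
    · rw [auxf_inr R hloc j hj, auxf_inl]
      exact iff_of_true
        ((aux_master hloc (Or.inr (by simp)) (Or.inl (by simp))).mpr (aux_distj1 hloc hj b'))
        (Fin.castSucc_lt_last _).ne'
    · rw [auxf_inr R hloc j hj, auxf_inr R hloc j' hj']
      exact iff_of_false
        (fun hd => aux_distjj hloc hj hj'
          ((aux_master hloc (Or.inr (by simp)) (Or.inr (by simp))).mp hd))
        (by simp)
  have hcount : ∀ c, Nat.card {p // auxf R hloc p = c} = Nat.card {a : R // ¬IsUnit a} := by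
    intro c
    have h1 : Nat.card {p // auxf R hloc p = c} =
        Nat.card {x : R ⊕ {a : R // ¬IsUnit a} // auxcl R hloc x = c} :=
      Nat.card_congr (Equiv.subtypeEquiv (auxE R hloc).symm (fun p => Iff.rfl))
    rw [h1]
    induction c using Fin.lastCases with
    | last =>
      refine (Nat.card_congr (Equiv.ofBijective
        (fun j : {a : R // ¬IsUnit a} => ⟨Sum.inr j, rfl⟩) ⟨?_, ?_⟩)).symm
      · intro x y hxy
        simp only [Subtype.mk.injEq, Sum.inr.injEq] at hxy
        exact Sum.inr_injective (congrArg Subtype.val hxy)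
      · rintro ⟨(b | j), hx⟩
        · exact absurd hx (Fin.castSucc_lt_last _).ne
        · exact ⟨j, rfl⟩
    | cast i =>
      have h2 : Nat.card {x : R ⊕ {a : R // ¬IsUnit a} // auxcl R hloc x = Fin.castSucc i} =
          Nat.card {b : R // QuotientAddGroup.mk (s := auxJ R hloc) b =
            (Finite.equivFinOfCardEq (aux_cardQ R hloc)).symm i} := by
        refine (Nat.card_congr (Equiv.ofBijective
          (fun b : {b : R // QuotientAddGroup.mk (s := auxJ R hloc) b =
              (Finite.equivFinOfCardEq (aux_cardQ R hloc)).symm i} =>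
            (⟨Sum.inl b.1, by
              show Fin.castSucc _ = Fin.castSucc i
              rw [Fin.castSucc_inj, Equiv.apply_eq_iff_eq_symm_apply]
              exact b.2⟩ : {x : R ⊕ {a : R // ¬IsUnit a} // auxcl R hloc x = Fin.castSucc i}))
          ⟨?_, ?_⟩)).symm
        · intro x y hxy
          simp only [Subtype.mk.injEq, Sum.inl.injEq] at hxy
          exact Subtype.ext hxy
        · rintro ⟨(b | j), hx⟩
          · refine ⟨⟨b, ?_⟩, rfl⟩
            have hx' : Fin.castSucc ((Finite.equivFinOfCardEq (aux_cardQ R hloc))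
                (QuotientAddGroup.mk b)) = Fin.castSucc i := hx
            rw [Fin.castSucc_inj, Equiv.apply_eq_iff_eq_symm_apply] at hx'
            exact hx'
          · exact absurd hx (Fin.castSucc_lt_last _).ne'
      rw [h2]
      obtain ⟨b₀, hb₀⟩ :=
        Quotient.exists_rep ((Finite.equivFinOfCardEq (aux_cardQ R hloc)).symm i)
      refine (Nat.card_congr (Equiv.ofBijective
        (fun j : {a : R // ¬IsUnit a} => ⟨b₀ + j.1, by
          rw [← hb₀]
          show QuotientAddGroup.mk _ = QuotientAddGroup.mk _
          rw [QuotientAddGroup.mk_add, (QuotientAddGroup.eq_zero_iff _).mpr ((aux_mem_auxJ R hloc _).mpr j.2), add_zero]⟩)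
        ⟨?_, ?_⟩)).symm
      · intro x y hxy
        simp only [Subtype.mk.injEq, add_right_inj] at hxy
        exact Subtype.ext hxy
      · rintro ⟨b, hb⟩
        have hb' : QuotientAddGroup.mk (s := auxJ R hloc) b₀ = QuotientAddGroup.mk b := by
          rw [show QuotientAddGroup.mk (s := auxJ R hloc) b₀ = Quotient.mk _ b₀ from rfl, hb₀, hb]
        have hmem := (QuotientAddGroup.eq (s := auxJ R hloc)).mp hb'
        exact ⟨⟨-b₀ + b, hmem⟩, Subtype.ext (add_neg_cancel_left b₀ b)⟩
  refine ⟨auxf R hloc, hcount, hdist, ?_⟩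
  intro p q
  constructor
  · intro h r
    rw [hdist p r, hdist q r, h]
  · intro h
    have hnqq : ¬IsDistant R q.1 q.1 := fun hd => ((hdist q q).mp hd) rfl
    by_contra hne
    exact hnqq ((h q).mp ((hdist p q).mpr hne))
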